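/- For every real ξ > 1 there exists a unique z₀ ∈ (−1, 0) such that (1/2)·(z₀ − 1/z₀) + ξ·log(−z₀) = 0. Moreover the map ξ ↦ z₀(ξ) is strictly increasing: if 1 < ξ < ξ' and z₀, z₀' ∈ (−1, 0) are the corresponding solutions, then z₀ < z₀'. -/

import Mathlib

open Real Set

noncomputable def Φre (ξ z : ℝ) : ℝ := (1/2) * (z - 1/z) + ξ * Real.log (-z)

lemma Φre_hasDerivAt (ξ : ℝ) {z : ℝ} (hz : z < 0) :
    HasDerivAt (Φre ξ) ((z^2 + 2*ξ*z + 1) / (2*z^2)) z := by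
  have hz0 : z ≠ 0 := hz.ne
  have h1 : HasDerivAt (fun z : ℝ => z - 1/z) (1 - (-(z^2)⁻¹)) z := by
    simp only [one_div]; exact (hasDerivAt_id' z).sub (hasDerivAt_inv hz0)
  have h2 : HasDerivAt (fun z : ℝ => Real.log (-z)) ((-z)⁻¹ * (-1)) z := by
    exact (Real.hasDerivAt_log (neg_ne_zero.mpr hz0)).comp z ((hasDerivAt_id z).neg)
  have := (h1.const_mul (1/2 : ℝ)).add (h2.const_mul ξ)
  refine this.congr_deriv ?_
  field_simp
  ring

lemma Φre_contOn (ξ : ℝ) {s : Set ℝ} (hs : s ⊆ Iio (0:ℝ)) : ContinuousOn (Φre ξ) s :=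
  fun z hz => ((Φre_hasDerivAt ξ (hs hz)).continuousAt).continuousWithinAt

lemma Φre_key (ξ : ℝ) (hξ : 1 < ξ) :
    ∃ z₀ ∈ Ioo (-1:ℝ) 0, Φre ξ z₀ = 0 ∧
      ∀ z ∈ Ioo (-1:ℝ) 0, (z < z₀ → Φre ξ z < 0) ∧ (z₀ < z → 0 < Φre ξ z) := by
  have hξ0 : (0:ℝ) < ξ := by linarith
  set s : ℝ := Real.sqrt (ξ^2 - 1) with hs_def
  have hs2 : s^2 = ξ^2 - 1 := Real.sq_sqrt (by nlinarith)
  have hs_pos : 0 < s := Real.sqrt_pos.mpr (by nlinarith)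
  have hs_lt : s < ξ := by nlinarith [sq_nonneg (s - ξ)]
  have hs_gt : ξ - 1 < s := by nlinarith
  set r : ℝ := -ξ + s with hr_def
  have hr_neg : r < 0 := by linarith
  have hr_gt : -1 < r := by linarith
  -- quadratic sign
  have hquad_neg : ∀ z : ℝ, -1 < z → z < r → z^2 + 2*ξ*z + 1 < 0 := by
    intro z h1 h2
    nlinarith [sq_nonneg (z + ξ)]
  have hquad_pos : ∀ z : ℝ, r < z → 0 < z^2 + 2*ξ*z + 1 := by
    intro z h1
    nlinarith [sq_nonneg (z + ξ - s)]
  -- strict anti on [-1, r]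
  have hanti : StrictAntiOn (Φre ξ) (Icc (-1:ℝ) r) := by
    apply strictAntiOn_of_deriv_neg (convex_Icc _ _)
      (Φre_contOn ξ (fun z hz => lt_of_le_of_lt hz.2 hr_neg))
    intro z hz
    rw [interior_Icc] at hz
    have hz0 : z < 0 := hz.2.trans hr_neg
    rw [(Φre_hasDerivAt ξ hz0).deriv]
    apply div_neg_of_neg_of_pos (hquad_neg z hz.1 hz.2)
    have hz0' : z * z > 0 := mul_pos_of_neg_of_neg hz0 hz0
    nlinarith
  -- strict mono on [r, 0)
  have hmono : StrictMonoOn (Φre ξ) (Ico r (0:ℝ)) := by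
    apply strictMonoOn_of_deriv_pos (convex_Ico _ _)
      (Φre_contOn ξ (fun z hz => hz.2))
    intro z hz
    rw [interior_Ico] at hz
    rw [(Φre_hasDerivAt ξ hz.2).deriv]
    apply div_pos (hquad_pos z hz.1)
    have hz0' : z * z > 0 := mul_pos_of_neg_of_neg hz.2 hz.2
    nlinarith
  have hfneg1 : Φre ξ (-1) = 0 := by
    simp [Φre]
  -- negativity on (-1, r]
  have hneg : ∀ z : ℝ, -1 < z → z ≤ r → Φre ξ z < 0 := by
    intro z h1 h2
    have := hanti (left_mem_Icc.mpr (by linarith)) ⟨h1.le, h2⟩ h1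
    rwa [hfneg1] at this
  -- positive point b
  set c : ℝ := 8 * ξ with hc_def
  set b : ℝ := -Real.exp (-c) with hb_def
  have hc_pos : 0 < c := by linarith
  have hb_neg : b < 0 := neg_neg_iff_pos.mpr (Real.exp_pos _)
  have hb_gt : -1 < b := by
    have : Real.exp (-c) < 1 := Real.exp_lt_one_iff.mpr (by linarith)
    simp only [hb_def]; linarith
  have hfb : 0 < Φre ξ b := by
    have he : Real.exp (-c) > 0 := Real.exp_pos _
    have hlog : Real.log (-b) = -c := by
      simp [hb_def, Real.log_exp]
    have h1b : 1/b = -Real.exp c := by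
      rw [hb_def, Real.exp_neg]
      field_simp
    have hval : Φre ξ b = (1/2) * (-(Real.exp (-c)) + Real.exp c) - ξ * c := by
      simp only [Φre, h1b, hlog, hb_def]
      rw [neg_neg, Real.log_exp, div_neg, Real.exp_neg, div_inv_eq_mul, one_mul]
      ring
    have hexp_ge : (1 + c/2)^2 ≤ Real.exp c := by
      calc (1 + c/2)^2 ≤ (Real.exp (c/2))^2 := by
            apply pow_le_pow_left₀ (by positivity) _ 2
            linarith [Real.add_one_le_exp (c/2)]
        _ = Real.exp c := by rw [sq, ← Real.exp_add, add_halves]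
    have hem : Real.exp (-c) < 1 := Real.exp_lt_one_iff.mpr (by linarith)
    rw [hval]
    have : 1 + c + c^2/4 ≤ Real.exp c := by nlinarith
    nlinarith [hc_def]
  have hrb : r < b := by
    by_contra h
    push_neg at h
    exact absurd (hneg b hb_gt h) (by linarith)
  have hfr : Φre ξ r < 0 := hneg r hr_gt le_rfl
  -- IVT
  obtain ⟨z₀, hz₀mem, hz₀⟩ : ∃ z₀ ∈ Ioo r b, Φre ξ z₀ = 0 := by
    have hiv := intermediate_value_Ioo (hrb.le)
      (Φre_contOn ξ (fun z hz => lt_of_le_of_lt hz.2 hb_neg))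
    have : (0:ℝ) ∈ Ioo (Φre ξ r) (Φre ξ b) := ⟨hfr, hfb⟩
    obtain ⟨z₀, hz₀, hfz₀⟩ := hiv this
    exact ⟨z₀, hz₀, hfz₀⟩
  have hz₀0 : z₀ < 0 := hz₀mem.2.trans hb_neg
  have hz₀1 : -1 < z₀ := hr_gt.trans hz₀mem.1
  refine ⟨z₀, ⟨hz₀1, hz₀0⟩, hz₀, ?_⟩
  intro z hz
  constructor
  · intro hlt
    rcases le_or_gt z r with h | h
    · exact hneg z hz.1 h
    · have := hmono ⟨h.le, hz.2⟩ ⟨hz₀mem.1.le, hz₀0⟩ hlt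
      rwa [hz₀] at this
  · intro hlt
    have := hmono ⟨hz₀mem.1.le, hz₀0⟩ ⟨(hz₀mem.1.trans hlt).le, hz.2⟩ hlt
    rwa [hz₀] at this

theorem level_line_crossing_point
    : (∀ ξ : ℝ, 1 < ξ →
        ∃! z₀ : ℝ, z₀ ∈ Set.Ioo (-1 : ℝ) 0 ∧
          (1/2) * (z₀ - 1/z₀) + ξ * Real.log (-z₀) = 0) ∧
      (∀ ξ ξ' z₀ z₀' : ℝ, 1 < ξ → ξ < ξ' →
        z₀ ∈ Set.Ioo (-1 : ℝ) 0 →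
        (1/2) * (z₀ - 1/z₀) + ξ * Real.log (-z₀) = 0 →
        z₀' ∈ Set.Ioo (-1 : ℝ) 0 →
        (1/2) * (z₀' - 1/z₀') + ξ' * Real.log (-z₀') = 0 →
        z₀ < z₀') := by
  constructor
  · intro ξ hξ
    obtain ⟨z₀, hmem, hz₀, hsign⟩ := Φre_key ξ hξ
    refine ⟨z₀, ⟨hmem, hz₀⟩, ?_⟩
    rintro z ⟨hzmem, hz⟩
    by_contra hne
    rcases lt_or_gt_of_ne hne with h | h
    · exact absurd hz ((hsign z hzmem).1 h).ne
    · exact absurd hz ((hsign z hzmem).2 h).ne'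
  · intro ξ ξ' z₀ z₀' hξ hξξ' hmem hz₀ hmem' hz₀'
    have hξ' : 1 < ξ' := hξ.trans hξξ'
    obtain ⟨w, hwmem, hw, hsign⟩ := Φre_key ξ' hξ'
    -- z₀' is the unique zero for ξ', so z₀' = w; suffices Φre ξ' z₀ < 0
    have hlog_neg : Real.log (-z₀) < 0 := by
      apply Real.log_neg (by linarith [hmem.2]) (by linarith [hmem.1])
    have hval : Φre ξ' z₀ < 0 := by
      have : Φre ξ' z₀ = (1/2) * (z₀ - 1/z₀) + ξ * Real.log (-z₀) + (ξ' - ξ) * Real.log (-z₀) := by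
        simp only [Φre]; ring
      rw [this, hz₀]
      have : (ξ' - ξ) * Real.log (-z₀) < 0 := mul_neg_of_pos_of_neg (by linarith) hlog_neg
      linarith
    -- z₀' = w
    have hz₀'w : z₀' = w := by
      by_contra hne
      rcases lt_or_gt_of_ne hne with h | h
      · exact absurd hz₀' ((hsign z₀' hmem').1 h).ne
      · exact absurd hz₀' ((hsign z₀' hmem').2 h).ne'
    rw [hz₀'w]
    by_contra h
    push_neg at h
    rcases eq_or_lt_of_le h with h' | h'
    · rw [h'] at hw; exact absurd hw hval.ne
    · linarith [(hsign z₀ hmem).2 h']
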